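/- Let κ be a field, let p : Fin n → ℝ≥0 and q : Fin m → ℝ≥0 be degree vectors, and let A be a (q,p)-admissible m×n matrix over κ[ℝ₊]. Then there exist natural numbers a and b and a vector s : Fin b → ℝ≥0 with s i > 0 for all i, such that the cokernel of the κ[ℝ₊]-linear map A.mulVecLin : (Fin n → κ[ℝ₊]) → (Fin m → κ[ℝ₊]) is isomorphic as a κ[ℝ₊]-module to the direct product (Fin a → κ[ℝ₊]) × Π i : Fin b, κ[ℝ₊] ⧸ Ideal.span {T^(s i)}. -/

import Mathlib

open scoped NNReal

noncomputable section

/-- The ring `κ[ℝ₊]` of polynomials with coefficients in `κ` and exponents in `ℝ≥0`,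
realized as the monoid algebra of the additive monoid `ℝ≥0` over `κ`. -/
abbrev PersRing (κ : Type) [Field κ] : Type := AddMonoidAlgebra κ ℝ≥0

/-- An `m × n` matrix over `κ[ℝ₊]` is `(q, p)`-admissible if every entry `A i j` is either `0`
or a nonzero scalar multiple of the monomial `T ^ (p j - q i)` with `q i ≤ p j`.  These are
exactly the matrices of `ℝ₊`-graded homomorphisms between graded free finitely generated
`κ[ℝ₊]`-modules with homogeneous bases of degrees `p` and `q`. -/
def IsAdmissible {κ : Type} [Field κ] {m n : ℕ} (q : Fin m → ℝ≥0) (p : Fin n → ℝ≥0)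
    (A : Matrix (Fin m) (Fin n) (PersRing κ)) : Prop :=
  ∀ i j, A i j = 0 ∨ (q i ≤ p j ∧ ∃ c : κ, c ≠ 0 ∧
    A i j = c • AddMonoidAlgebra.single (p j - q i) (1 : κ))

namespace BarcodeAux

variable {κ : Type} [Field κ]

/-- The monomial `T^t`. -/
abbrev Tm (κ : Type) [Field κ] (t : ℝ≥0) : PersRing κ := AddMonoidAlgebra.single t (1 : κ)

theorem Tm_mul (a b : ℝ≥0) : Tm κ a * Tm κ b = Tm κ (a + b) := by
  simp [Tm, AddMonoidAlgebra.single_mul_single]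

theorem smul_Tm (c : κ) (t : ℝ≥0) : c • Tm κ t = AddMonoidAlgebra.single t c := by
  rw [Tm, AddMonoidAlgebra.smul_single', mul_one]

theorem smul_Tm_ne_zero {c : κ} (hc : c ≠ 0) (t : ℝ≥0) : c • Tm κ t ≠ 0 := by
  rw [smul_Tm]
  exact fun h => hc (AddMonoidAlgebra.single_eq_zero.mp h)

theorem smul_Tm_mul (c c' : κ) (a b : ℝ≥0) :
    (c • Tm κ a) * (c' • Tm κ b) = (c * c') • Tm κ (a + b) := by
  rw [smul_mul_smul_comm, Tm_mul]

/-- Quotient of a product by a product of submodules. -/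
def quotProdEquiv {R M N : Type*} [CommRing R] [AddCommGroup M] [Module R M]
    [AddCommGroup N] [Module R N] (S : Submodule R M) (J : Submodule R N) :
    ((M × N) ⧸ S.prod J) ≃ₗ[R] (M ⧸ S) × (N ⧸ J) := by
  have hker : LinearMap.ker (S.mkQ.prodMap J.mkQ) = S.prod J := by
    rw [LinearMap.ker_prodMap, Submodule.ker_mkQ, Submodule.ker_mkQ]
  exact (Submodule.quotEquivOfEq _ _ hker.symm).trans
    (LinearMap.quotKerEquivOfSurjective _ (by
      rw [LinearMap.coe_prodMap]
      exact (S.mkQ_surjective).prodMap (J.mkQ_surjective)))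

/-- Drop a subsingleton factor from a product. -/
def prodSubsingletonEquiv (R M N : Type*) [CommRing R] [AddCommGroup M] [Module R M]
    [Subsingleton M] [AddCommGroup N] [Module R N] : (M × N) ≃ₗ[R] N where
  toFun := Prod.snd
  invFun n := (0, n)
  map_add' _ _ := rfl
  map_smul' _ _ := rfl
  left_inv z := Prod.ext (Subsingleton.elim _ _) rfl
  right_inv _ := rfl

/-- Pad with an empty product. -/
def emptyPadEquiv (R N : Type*) [CommRing R] [AddCommGroup N] [Module R N]
    (β : Fin 0 → Type*) [∀ i, AddCommGroup (β i)] [∀ i, Module R (β i)] :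
    N ≃ₗ[R] N × ∀ i : Fin 0, β i where
  toFun n := (n, fun i => i.elim0)
  invFun z := z.1
  map_add' _ _ := Prod.ext rfl (Subsingleton.elim _ _)
  map_smul' _ _ := Prod.ext rfl (Subsingleton.elim _ _)
  left_inv _ := rfl
  right_inv z := Prod.ext rfl (Subsingleton.elim _ _)

/-- `X × (Y × Z) ≃ Y × (X × Z)`. -/
def prodLeftSwap (R X Y Z : Type*) [CommRing R] [AddCommGroup X] [Module R X]
    [AddCommGroup Y] [Module R Y] [AddCommGroup Z] [Module R Z] :
    (X × Y × Z) ≃ₗ[R] Y × X × Z where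
  toFun w := (w.2.1, w.1, w.2.2)
  invFun w := (w.2.1, w.1, w.2.2)
  map_add' _ _ := rfl
  map_smul' _ _ := rfl
  left_inv _ := rfl
  right_inv _ := rfl

/-- Split off the `0`-th factor of a dependent product over `Fin (b+1)`. -/
def piConsEquiv {R : Type*} [CommRing R] {b : ℕ} (β : Fin (b + 1) → Type*)
    [∀ i, AddCommGroup (β i)] [∀ i, Module R (β i)] :
    (∀ i, β i) ≃ₗ[R] β 0 × ∀ i : Fin b, β i.succ where
  toFun f := (f 0, fun i => f i.succ)
  invFun z := Fin.cons z.1 z.2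
  map_add' _ _ := rfl
  map_smul' _ _ := rfl
  left_inv f := funext fun i => Fin.cases rfl (fun _ => rfl) i
  right_inv z := rfl

/-- Transport a bar along an equality of lengths. -/
def barCongr {s t : ℝ≥0} (h : s = t) :
    (PersRing κ ⧸ Ideal.span {AddMonoidAlgebra.single s (1 : κ)}) ≃ₗ[PersRing κ]
    (PersRing κ ⧸ Ideal.span {AddMonoidAlgebra.single t (1 : κ)}) := by
  subst h; exact LinearEquiv.refl _ _

set_option maxHeartbeats 8000000 in
theorem aux (κ : Type) [Field κ] (m : ℕ) : ∀ (n : ℕ) (p : Fin n → ℝ≥0) (q : Fin m → ℝ≥0)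
    (A : Matrix (Fin m) (Fin n) (PersRing κ)), IsAdmissible q p A →
    ∃ (a b : ℕ) (s : Fin b → ℝ≥0), (∀ i, 0 < s i) ∧
      Nonempty (((Fin m → PersRing κ) ⧸ LinearMap.range A.mulVecLin) ≃ₗ[PersRing κ]
        ((Fin a → PersRing κ) ×
          ∀ i : Fin b,
            PersRing κ ⧸ Ideal.span {AddMonoidAlgebra.single (s i) (1 : κ)})) := by
  induction m with
  | zero =>
      intro n p q A _
      have hz : LinearMap.range A.mulVecLin = ⊥ := by
        rw [Submodule.eq_bot_iff]
        intro x _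
        exact Subsingleton.elim x 0
      exact ⟨0, 0, Fin.elim0, fun i => i.elim0,
        ⟨(Submodule.quotEquivOfEqBot _ hz).trans (emptyPadEquiv _ _ _)⟩⟩
  | succ m IH =>
      intro n p q A hA
      classical
      by_cases hz : LinearMap.range A.mulVecLin = ⊥
      · exact ⟨m + 1, 0, Fin.elim0, fun i => i.elim0,
          ⟨(Submodule.quotEquivOfEqBot _ hz).trans (emptyPadEquiv _ _ _)⟩⟩
      · -- there is a nonzero entry
        have hne : ((Finset.univ.filter
            fun ij : Fin (m + 1) × Fin n => A ij.1 ij.2 ≠ 0)).Nonempty := by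
          by_contra h
          rw [Finset.not_nonempty_iff_eq_empty, Finset.filter_eq_empty_iff] at h
          apply hz
          have hA0 : A = 0 := Matrix.ext fun i j => by
            have := h (x := (i, j)) (Finset.mem_univ _)
            simpa using this
          rw [hA0, Matrix.mulVecLin_zero, LinearMap.range_zero]
        obtain ⟨⟨i0, j0⟩, hij0mem, hmin⟩ := Finset.exists_min_image _
          (fun ij : Fin (m + 1) × Fin n => p ij.2 - q ij.1) hne
        rw [Finset.mem_filter] at hij0mem
        have hpiv : A i0 j0 ≠ 0 := hij0mem.2
        have hmin' : ∀ i j, A i j ≠ 0 → p j0 - q i0 ≤ p j - q i := by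
          intro i j h
          exact hmin (i, j) (by simp [h])
        obtain ⟨hle0, c0, hc0, hA00⟩ := (hA i0 j0).resolve_left hpiv
        set d0 : ℝ≥0 := p j0 - q i0 with hd0
        -- row factors
        have hrowfac : ∀ i : Fin (m + 1), ∃ fi : PersRing κ, A i j0 = fi * A i0 j0 ∧
            (fi = 0 ∨ (q i ≤ q i0 ∧ ∃ c : κ, c ≠ 0 ∧ fi = c • Tm κ (q i0 - q i))) := by
          intro i
          rcases hA i j0 with h | ⟨hle, c, hc, hAij⟩
          · exact ⟨0, by rw [h, zero_mul], Or.inl rfl⟩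
          · have hAij0 : A i j0 ≠ 0 := by rw [hAij]; exact smul_Tm_ne_zero hc _
            have hqi : q i ≤ q i0 := by
              have h1 : p j0 - q i0 ≤ p j0 - q i := hmin' i j0 hAij0
              exact (tsub_le_tsub_iff_left hle).mp h1
            refine ⟨(c * c0⁻¹) • Tm κ (q i0 - q i), ?_,
              Or.inr ⟨hqi, c * c0⁻¹, mul_ne_zero hc (inv_ne_zero hc0), rfl⟩⟩
            rw [hA00, smul_Tm_mul, hAij]
            have he : q i0 - q i + d0 = p j0 - q i := by
              rw [hd0, add_comm]
              exact tsub_add_tsub_cancel hle0 hqi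
            have hcc : c * c0⁻¹ * c0 = c := by field_simp
            rw [he, hcc]
        -- column factors
        have hcolfac : ∀ j : Fin n, ∃ gj : PersRing κ, A i0 j = gj * A i0 j0 ∧
            (gj = 0 ∨ (p j0 ≤ p j ∧ ∃ c : κ, c ≠ 0 ∧ gj = c • Tm κ (p j - p j0))) := by
          intro j
          rcases hA i0 j with h | ⟨hle, c, hc, hAij⟩
          · exact ⟨0, by rw [h, zero_mul], Or.inl rfl⟩
          · have hAij0 : A i0 j ≠ 0 := by rw [hAij]; exact smul_Tm_ne_zero hc _
            have hpj : p j0 ≤ p j := by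
              have h1 : p j0 - q i0 ≤ p j - q i0 := hmin' i0 j hAij0
              exact (tsub_le_tsub_iff_right hle).mp h1
            refine ⟨(c * c0⁻¹) • Tm κ (p j - p j0), ?_,
              Or.inr ⟨hpj, c * c0⁻¹, mul_ne_zero hc (inv_ne_zero hc0), rfl⟩⟩
            rw [hA00, smul_Tm_mul, hAij]
            have he : p j - p j0 + d0 = p j - q i0 := by
              rw [hd0]
              exact tsub_add_tsub_cancel hpj hle0
            have hcc : c * c0⁻¹ * c0 = c := by field_simp
            rw [he, hcc]
        choose f hf hfd using hrowfac
        choose g hg hgd using hcolfac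
        set f' : Fin (m + 1) → PersRing κ := Function.update f i0 0 with hf'def
        set g' : Fin n → PersRing κ := Function.update g j0 0 with hg'def
        have hf'i0 : f' i0 = 0 := Function.update_self _ _ _
        have hg'j0 : g' j0 = 0 := Function.update_self _ _ _
        set N : Matrix (Fin (m + 1)) (Fin (m + 1)) (PersRing κ) :=
          Matrix.of fun i k => if k = i0 then f' i else 0 with hNdef
        set Mm : Matrix (Fin n) (Fin n) (PersRing κ) :=
          Matrix.of fun j k => if j = j0 then g' k else 0 with hMdef
        have hNN : N * N = 0 := by
          funext i k
          rw [Matrix.mul_apply, Matrix.zero_apply]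
          refine Finset.sum_eq_zero fun l _ => ?_
          by_cases hl : l = i0
          · subst hl; simp [hNdef, hf'i0]
          · simp [hNdef, hl]
        have hMM : Mm * Mm = 0 := by
          funext j k
          rw [Matrix.mul_apply, Matrix.zero_apply]
          refine Finset.sum_eq_zero fun l _ => ?_
          by_cases hl : l = j0
          · subst hl; simp [hMdef, hg'j0]
          · simp [hMdef, hl]
        set P : Matrix (Fin (m + 1)) (Fin (m + 1)) (PersRing κ) := 1 - N with hPdef
        set Pinv : Matrix (Fin (m + 1)) (Fin (m + 1)) (PersRing κ) := 1 + N with hPinvdef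
        set Q : Matrix (Fin n) (Fin n) (PersRing κ) := 1 - Mm with hQdef
        set Qinv : Matrix (Fin n) (Fin n) (PersRing κ) := 1 + Mm with hQinvdef
        have hPP : P * Pinv = 1 := by
          have h : P * Pinv = 1 - N * N := by rw [hPdef, hPinvdef]; noncomm_ring
          rw [h, hNN, sub_zero]
        have hPP' : Pinv * P = 1 := by
          have h : Pinv * P = 1 - N * N := by rw [hPdef, hPinvdef]; noncomm_ring
          rw [h, hNN, sub_zero]
        have hQQ : Q * Qinv = 1 := by
          have h : Q * Qinv = 1 - Mm * Mm := by rw [hQdef, hQinvdef]; noncomm_ring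
          rw [h, hMM, sub_zero]
        set B : Matrix (Fin (m + 1)) (Fin n) (PersRing κ) := P * A * Q with hBdef
        -- entry formula for B
        have hNA : ∀ i j, (N * A) i j = f' i * A i0 j := by
          intro i j
          rw [Matrix.mul_apply, Finset.sum_eq_single i0]
          · simp [hNdef]
          · intro l _ hl
            simp [hNdef, hl]
          · simp
        have hPA : ∀ i j, (P * A) i j = A i j - f' i * A i0 j := by
          intro i j
          rw [hPdef, Matrix.sub_mul, Matrix.one_mul, Matrix.sub_apply, hNA]
        have hB : ∀ i j, B i j =
            (A i j - f' i * A i0 j) - (A i j0 - f' i * A i0 j0) * g' j := by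
          intro i j
          have h1 : B = P * A - (P * A) * Mm := by
            rw [hBdef, hQdef, Matrix.mul_sub, Matrix.mul_one]
          have h2 : ((P * A) * Mm) i j = (P * A) i j0 * g' j := by
            rw [Matrix.mul_apply, Finset.sum_eq_single j0]
            · simp [hMdef]
            · intro l _ hl
              simp [hMdef, hl]
            · simp
          rw [h1, Matrix.sub_apply, h2, hPA, hPA]
        have hBrow : ∀ j, j ≠ j0 → B i0 j = 0 := by
          intro j hj
          rw [hB, hf'i0, zero_mul, sub_zero, zero_mul, sub_zero, hg'def,
            Function.update_of_ne hj, hg j, mul_comm, sub_self]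
        have hBcol : ∀ i, i ≠ i0 → B i j0 = 0 := by
          intro i hi
          rw [hB, hg'j0, mul_zero, sub_zero, hf'def, Function.update_of_ne hi, hf i, sub_self]
        have hBpiv : B i0 j0 = A i0 j0 := by
          rw [hB, hf'i0, zero_mul, sub_zero, hg'j0, mul_zero, sub_zero]
        -- entry formula off pivot row/column
        have hBoff : ∀ i j, i ≠ i0 → j ≠ j0 → B i j = A i j - f i * A i0 j := by
          intro i j hi hj
          rw [hB, hf'def, Function.update_of_ne hi, hf i, sub_self, zero_mul, sub_zero]
        -- the reduced submatrix
        set A' : Matrix (Fin m) (Fin n) (PersRing κ) :=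
          Matrix.of fun i j => B (i0.succAbove i) j with hA'def
        have hadm' : IsAdmissible (fun i => q (i0.succAbove i)) p A' := by
          intro i j
          have hi : i0.succAbove i ≠ i0 := Fin.succAbove_ne i0 i
          by_cases hj : j = j0
          · subst hj
            exact Or.inl (hBcol _ hi)
          · have hAij : A' i j = A (i0.succAbove i) j - f (i0.succAbove i) * A i0 j :=
              hBoff _ _ hi hj
            rcases hfd (i0.succAbove i) with hf0 | ⟨hqle, c1, hc1, hfe⟩
            · rw [hAij, hf0, zero_mul, sub_zero]
              exact hA _ j
            · rcases hA i0 j with h0 | ⟨hle2, c2, hc2, he2⟩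
              · rw [hAij, h0, mul_zero, sub_zero]
                exact hA _ j
              · have hqp : q (i0.succAbove i) ≤ p j := hqle.trans hle2
                have hprod : f (i0.succAbove i) * A i0 j =
                    (c1 * c2) • Tm κ (p j - q (i0.succAbove i)) := by
                  have he : q i0 - q (i0.succAbove i) + (p j - q i0) =
                      p j - q (i0.succAbove i) := by
                    rw [add_comm]; exact tsub_add_tsub_cancel hle2 hqle
                  rw [hfe, he2, smul_Tm_mul, he]
                rcases hA (i0.succAbove i) j with h3 | ⟨_, c3, hc3, he3⟩
                · right
                  refine ⟨hqp, -(c1 * c2), neg_ne_zero.mpr (mul_ne_zero hc1 hc2), ?_⟩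
                  rw [hAij, h3, hprod, zero_sub, ← neg_smul]
                · have hBij : A' i j = (c3 - c1 * c2) • Tm κ (p j - q (i0.succAbove i)) := by
                    rw [hAij, he3, hprod, ← sub_smul]
                  by_cases hcc : c3 - c1 * c2 = 0
                  · left
                    rw [hBij, hcc, zero_smul]
                  · exact Or.inr ⟨hqp, c3 - c1 * c2, hcc, hBij⟩
        -- ranges
        have hQsurj : Function.Surjective Q.mulVecLin := by
          intro x
          refine ⟨Qinv.mulVecLin x, ?_⟩
          have h := congrArg (fun C : Matrix (Fin n) (Fin n) (PersRing κ) =>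
            C.mulVecLin x) hQQ
          simpa [Matrix.mulVecLin_mul] using h
        have hrangeB : LinearMap.range B.mulVecLin =
            Submodule.map P.mulVecLin (LinearMap.range A.mulVecLin) := by
          rw [hBdef, Matrix.mulVecLin_mul,
            LinearMap.range_comp_of_range_eq_top _ (LinearMap.range_eq_top.mpr hQsurj),
            Matrix.mulVecLin_mul, LinearMap.range_comp]
        set e : (Fin (m + 1) → PersRing κ) ≃ₗ[PersRing κ] (Fin (m + 1) → PersRing κ) :=
          LinearEquiv.ofLinear P.mulVecLin Pinv.mulVecLin
            (by rw [← Matrix.mulVecLin_mul, hPP, Matrix.mulVecLin_one])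
            (by rw [← Matrix.mulVecLin_mul, hPP', Matrix.mulVecLin_one]) with hedef
        have hmapE : (LinearMap.range A.mulVecLin).map
            (e : (Fin (m + 1) → PersRing κ) →ₗ[PersRing κ] (Fin (m + 1) → PersRing κ)) =
            LinearMap.range B.mulVecLin := by
          rw [hrangeB]; rfl
        set φ : (Fin (m + 1) → PersRing κ) ≃ₗ[PersRing κ]
            (PersRing κ) × (Fin m → PersRing κ) :=
          { toFun := fun x => (x i0, fun i => x (i0.succAbove i))
            invFun := fun z => i0.insertNth z.1 z.2
            map_add' := fun _ _ => rfl
            map_smul' := fun _ _ => rfl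
            left_inv := fun x => funext fun k => by
              refine Fin.succAboveCases i0 ?_ (fun j => ?_) k
              · simp
              · simp
            right_inv := fun z => by
              refine Prod.ext ?_ (funext fun i => ?_)
              · simp
              · simp } with hφdef
        set S : Submodule (PersRing κ) (PersRing κ) := Ideal.span {Tm κ d0} with hSdef
        set J : Submodule (PersRing κ) (Fin m → PersRing κ) :=
          LinearMap.range A'.mulVecLin with hJdef
        have hBpiv' : B i0 j0 = c0 • Tm κ d0 := by rw [hBpiv, hA00]
        have hmulVecB_i0 : ∀ v, B.mulVec v i0 = B i0 j0 * v j0 := by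
          intro v
          rw [Matrix.mulVec, dotProduct, Finset.sum_eq_single j0]
          · intro l _ hl
            rw [hBrow l hl, zero_mul]
          · simp
        have hmulVecB_suc : ∀ v i, B.mulVec v (i0.succAbove i) = A'.mulVec v i := by
          intro v i
          rfl
        have hmapφ : (LinearMap.range B.mulVecLin).map
            (φ : (Fin (m + 1) → PersRing κ) →ₗ[PersRing κ]
              (PersRing κ) × (Fin m → PersRing κ)) = S.prod J := by
          apply le_antisymm
          · rintro z hz
            rw [Submodule.mem_map] at hz
            obtain ⟨x, hx, rfl⟩ := hz
            obtain ⟨v, rfl⟩ := hx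
            refine Submodule.mem_prod.mpr ⟨?_, ?_⟩
            · show (B.mulVecLin v) i0 ∈ S
              rw [Matrix.mulVecLin_apply, hmulVecB_i0, hBpiv']
              refine Ideal.mem_span_singleton'.mpr ⟨c0 • v j0, ?_⟩
              rw [smul_mul_assoc, smul_mul_assoc, mul_comm]
            · exact ⟨v, funext fun i => (hmulVecB_suc v i).symm⟩
          · rintro ⟨y, z⟩ hyz
            obtain ⟨hy, hz⟩ := Submodule.mem_prod.mp hyz
            obtain ⟨r, hr⟩ := Ideal.mem_span_singleton'.mp hy
            obtain ⟨v, hv⟩ := hz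
            refine Submodule.mem_map.mpr
              ⟨B.mulVecLin (Function.update v j0 (c0⁻¹ • r)), ⟨_, rfl⟩, ?_⟩
            refine Prod.ext ?_ (funext fun i => ?_)
            · show B.mulVec _ i0 = y
              rw [hmulVecB_i0, Function.update_self, hBpiv', smul_mul_smul_comm,
                mul_inv_cancel₀ hc0, one_smul, mul_comm, hr]
            · show B.mulVec _ (i0.succAbove i) = z i
              have hv' : A'.mulVec v = z := hv
              rw [hmulVecB_suc, ← hv']
              show A'.mulVec _ i = A'.mulVec v i
              rw [Matrix.mulVec, Matrix.mulVec, dotProduct, dotProduct]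
              refine Finset.sum_congr rfl fun j _ => ?_
              by_cases hj : j = j0
              · have h0 : A' i j0 = 0 := hBcol _ (Fin.succAbove_ne i0 i)
                rw [hj, h0, zero_mul, zero_mul]
              · rw [Function.update_of_ne hj]
        -- assemble
        obtain ⟨a', b', s', hs', ⟨E4⟩⟩ := IH n p (fun i => q (i0.succAbove i)) A' hadm'
        have E1 := Submodule.Quotient.equiv _ _ e hmapE
        have E2 := Submodule.Quotient.equiv _ _ φ hmapφ
        have E3 := quotProdEquiv S J
        by_cases hd : d0 = 0
        · have hS : S = ⊤ := by
            rw [hSdef, hd]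
            have h1 : Tm κ 0 = 1 := AddMonoidAlgebra.one_def.symm
            rw [h1, Ideal.span_singleton_one]
          haveI : Subsingleton (PersRing κ ⧸ S) :=
            Submodule.Quotient.subsingleton_iff.mpr hS
          refine ⟨a', b', s', hs', ⟨?_⟩⟩
          exact E1.trans (E2.trans (E3.trans
            ((prodSubsingletonEquiv _ _ _).trans E4)))
        · refine ⟨a', b' + 1, Fin.cons (α := fun _ : Fin (b' + 1) => ℝ≥0) d0 s', ?_, ⟨?_⟩⟩
          · intro i
            refine Fin.cases ?_ (fun j => ?_) i
            · simpa using pos_iff_ne_zero.mpr hd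
            · simpa using hs' j
          · have Etail1 := LinearEquiv.prodCongr
              (LinearEquiv.refl (PersRing κ) (PersRing κ ⧸ S)) E4
            have Etail2 := prodLeftSwap (PersRing κ) (PersRing κ ⧸ S)
              (Fin a' → PersRing κ)
              (∀ i : Fin b', PersRing κ ⧸ Ideal.span
                {AddMonoidAlgebra.single (s' i) (1 : κ)})
            have Econs : ((PersRing κ ⧸ S) ×
                ∀ i : Fin b', PersRing κ ⧸ Ideal.span
                  {AddMonoidAlgebra.single (s' i) (1 : κ)}) ≃ₗ[PersRing κ]
                ∀ i : Fin (b' + 1), PersRing κ ⧸ Ideal.span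
                  {AddMonoidAlgebra.single (Fin.cons (α := fun _ : Fin (b' + 1) => ℝ≥0) d0 s' i) (1 : κ)} := by
              have Epc := LinearEquiv.prodCongr
                (barCongr (κ := κ) (Fin.cons_zero (α := fun _ : Fin (b' + 1) => ℝ≥0) d0 s').symm)
                (LinearEquiv.piCongrRight fun i : Fin b' =>
                  barCongr (κ := κ) (Fin.cons_succ (α := fun _ : Fin (b' + 1) => ℝ≥0) d0 s' i).symm)
              have Epic := (piConsEquiv (R := PersRing κ) (fun i : Fin (b' + 1) =>
                  PersRing κ ⧸ Ideal.span
                    {AddMonoidAlgebra.single (Fin.cons (α := fun _ : Fin (b' + 1) => ℝ≥0) d0 s' i) (1 : κ)})).symm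
              exact Epc.trans Epic
            exact E1.trans (E2.trans (E3.trans (Etail1.trans (Etail2.trans
              (LinearEquiv.prodCongr
                (LinearEquiv.refl (PersRing κ) (Fin a' → PersRing κ)) Econs)))))

end BarcodeAux

/-- **Barcode classification (Proposition 2.7, existence part).**  The cokernel of the
`κ[ℝ₊]`-linear map given by a `(q, p)`-admissible matrix is isomorphic, as a
`κ[ℝ₊]`-module, to a finite direct sum of copies of `κ[ℝ₊]` (infinite bars) and of
quotients `κ[ℝ₊] ⧸ (T ^ s i)` with `s i > 0` (finite bars of positive length). -/
theorem cokernel_admissible_classification (κ : Type) [Field κ] {m n : ℕ}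
    (p : Fin n → ℝ≥0) (q : Fin m → ℝ≥0)
    (A : Matrix (Fin m) (Fin n) (PersRing κ)) (hA : IsAdmissible q p A) :
    ∃ (a b : ℕ) (s : Fin b → ℝ≥0), (∀ i, 0 < s i) ∧
      Nonempty (((Fin m → PersRing κ) ⧸ LinearMap.range A.mulVecLin) ≃ₗ[PersRing κ]
        ((Fin a → PersRing κ) ×
          ∀ i : Fin b,
            PersRing κ ⧸ Ideal.span {AddMonoidAlgebra.single (s i) (1 : κ)})) := by
  exact BarcodeAux.aux κ m n p q A hA

end
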